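/- arXiv:2001.00393 — 2 statements merged into one kernel-verified Lean document; each statement's English description precedes it below -/
import Mathlib

section
/- For every natural number n, (1/(2π)) ∫₀⁴ x^n √((4-x)/x) dx equals the Catalan number C_n = (1/(n+1))·binom(2n, n). -/
open MeasureTheory Real intervalIntegral Set

private lemma wallis_even (n : ℕ) :
    ∫ t in (0:ℝ)..(π/2), Real.sin t ^ (2*n) = π/2 * ((Nat.centralBinom n : ℝ) / 4^n) := by
  induction n with
  | zero => simp [Nat.centralBinom]
  | succ n ih =>
    have h := integral_sin_pow (a := 0) (b := π/2) (2*n)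
    simp only [Real.sin_zero, Real.cos_pi_div_two, Real.sin_pi_div_two, Real.cos_zero] at h
    have he : 2*(n+1) = 2*n + 2 := by ring
    rw [he, h, ih]
    have h1 : ((n:ℝ)+1) ≠ 0 := by positivity
    have hcb : (Nat.centralBinom (n+1) : ℝ)
        = 2*(2*(n:ℝ)+1) * (Nat.centralBinom n : ℝ) / ((n:ℝ)+1) := by
      rw [eq_div_iff h1]
      have := congrArg (Nat.cast (R := ℝ)) (Nat.succ_mul_centralBinom_succ n)
      push_cast at this
      linarith [this]
    have h4 : ((4:ℝ))^n ≠ 0 := by positivity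
    rw [hcb, pow_succ]
    push_cast
    field_simp
    ring

private lemma wallis_cos (n : ℕ) :
    ∫ t in (0:ℝ)..(π/2), Real.sin t ^ (2*n) * Real.cos t ^ 2
      = π/2 * ((Nat.centralBinom n : ℝ) / 4^n) / (2*n+2) := by
  have e : ∀ t : ℝ, Real.sin t ^ (2*n) * Real.cos t ^ 2
      = Real.sin t ^ (2*n) - Real.sin t ^ (2*n+2) := by
    intro t
    rw [Real.cos_sq']
    ring
  rw [intervalIntegral.integral_congr (fun t _ => e t)]
  rw [intervalIntegral.integral_sub (by apply Continuous.intervalIntegrable; fun_prop)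
    (by apply Continuous.intervalIntegrable; fun_prop)]
  have he : 2*n+2 = 2*(n+1) := by ring
  rw [he, wallis_even n, wallis_even (n+1)]
  have h1 : ((n:ℝ)+1) ≠ 0 := by positivity
  have hcb : (Nat.centralBinom (n+1) : ℝ)
      = 2*(2*(n:ℝ)+1) * (Nat.centralBinom n : ℝ) / ((n:ℝ)+1) := by
    rw [eq_div_iff h1]
    have := congrArg (Nat.cast (R := ℝ)) (Nat.succ_mul_centralBinom_succ n)
    push_cast at this
    linarith [this]
  have h4 : ((4:ℝ))^n ≠ 0 := by positivity
  have h2 : (2*(n:ℝ)+2) ≠ 0 := by positivity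
  rw [hcb, pow_succ]
  push_cast
  field_simp
  ring

theorem catalan_moments (n : ℕ) :
    (1 / (2 * π)) * ∫ x in (0:ℝ)..4, x ^ n * Real.sqrt ((4 - x) / x)
      = (1 / (n + 1 : ℝ)) * (Nat.choose (2 * n) n : ℝ) := by
  have hπ : (0:ℝ) < π := Real.pi_pos
  have hle : (0:ℝ) ≤ π/2 := by positivity
  set g : ℝ → ℝ := fun x => x ^ n * Real.sqrt ((4 - x) / x) with hg
  set f : ℝ → ℝ := fun t => 4 * Real.sin t ^ 2 with hf
  set F : ℝ → ℝ := fun t => 8 * Real.sin t * Real.cos t with hF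
  have hderiv : ∀ t : ℝ, HasDerivAt f (F t) t := by
    intro t
    have h := ((Real.hasDerivAt_sin t).pow 2).const_mul (4:ℝ)
    refine h.congr_deriv ?_
    simp [hF]
    ring
  have hkey : ∀ t ∈ Ioc (0:ℝ) (π/2),
      F t * g (f t) = 8 * 4^n * (Real.sin t ^ (2*n) * Real.cos t ^ 2) := by
    intro t ht
    have hs : 0 < Real.sin t := Real.sin_pos_of_pos_of_lt_pi ht.1 (lt_of_le_of_lt ht.2 (by linarith))
    have hc : 0 ≤ Real.cos t := Real.cos_nonneg_of_mem_Icc ⟨by linarith [ht.1], ht.2⟩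
    have h4 : (4:ℝ) - 4 * Real.sin t ^ 2 = 4 * Real.cos t ^ 2 := by
      nlinarith [Real.sin_sq_add_cos_sq t]
    simp only [hg, hf, hF]
    rw [h4]
    have hq : (4 * Real.cos t ^ 2) / (4 * Real.sin t ^ 2) = (Real.cos t / Real.sin t)^2 := by
      field_simp
    rw [hq, Real.sqrt_sq (by positivity)]
    field_simp
    ring
  -- continuity of g away from 0
  have hgcont : ContinuousOn g {x : ℝ | x ≠ 0} := by
    apply ContinuousOn.mul ((continuous_pow n).continuousOn)
    apply Real.continuous_sqrt.comp_continuousOn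
    exact ContinuousOn.div (by fun_prop) (by fun_prop) (fun x hx => hx)
  -- integrability of g on Icc 0 4
  have hsqrt4 : Real.sqrt 4 = 2 := by
    rw [show (4:ℝ) = 2^2 by norm_num, Real.sqrt_sq (by norm_num)]
  have hgInt : IntegrableOn g (Icc (0:ℝ) 4) := by
    have hM : IntegrableOn (fun x : ℝ => 2*4^n * x ^ (-(1/2) : ℝ)) (Icc (0:ℝ) 4) := by
      have := (intervalIntegral.intervalIntegrable_rpow' (a := 0) (b := 4)
        (r := -(1/2)) (by norm_num)).const_mul (2*4^n : ℝ)
      exact (intervalIntegrable_iff_integrableOn_Icc_of_le (by norm_num)).1 this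
    have hmeas : Measurable g :=
      (measurable_id.pow_const n).mul (Real.continuous_sqrt.measurable.comp
        ((measurable_const.sub measurable_id).div measurable_id))
    refine hM.integrable.mono hmeas.aestronglyMeasurable ?_
    rw [ae_restrict_iff' measurableSet_Icc]
    refine ae_of_all _ fun x hx => ?_
    rcases eq_or_lt_of_le hx.1 with h0 | h0
    · simp only [hg, ← h0]
      rw [Real.norm_eq_abs, Real.norm_eq_abs]
      simp [Real.zero_rpow (show (-(1/2):ℝ) ≠ 0 by norm_num)]
    · have hsx : 0 < Real.sqrt x := Real.sqrt_pos.2 h0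
      have h1 : x ^ n ≤ 4 ^ n := pow_le_pow_left₀ hx.1 hx.2 n
      have h2 : Real.sqrt ((4-x)/x) ≤ 2 / Real.sqrt x := by
        rw [Real.sqrt_div (by linarith [hx.2] : (0:ℝ) ≤ 4 - x) x]
        have : Real.sqrt (4 - x) ≤ 2 := by
          rw [← hsqrt4]
          exact Real.sqrt_le_sqrt (by linarith [h0])
        exact div_le_div_of_nonneg_right this hsx.le
      have hrw : x ^ (-(1/2) : ℝ) = 1 / Real.sqrt x := by
        rw [Real.rpow_neg hx.1, Real.sqrt_eq_rpow]
        exact (one_div _).symm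
      rw [Real.norm_eq_abs, Real.norm_eq_abs, abs_of_nonneg (by positivity),
        abs_of_nonneg (by positivity), hrw]
      calc x ^ n * Real.sqrt ((4-x)/x) ≤ 4^n * (2 / Real.sqrt x) :=
            mul_le_mul h1 h2 (Real.sqrt_nonneg _) (by positivity)
        _ = 2*4^n * (1 / Real.sqrt x) := by ring
  -- the substitution
  have hmin : min (0:ℝ) (π/2) = 0 := min_eq_left hle
  have hmax : max (0:ℝ) (π/2) = π/2 := max_eq_right hle
  have huIcc : (Set.uIcc (0:ℝ) (π/2)) = Icc (0:ℝ) (π/2) := uIcc_of_le hle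
  have himgIcc : f '' Icc (0:ℝ) (π/2) ⊆ Icc (0:ℝ) 4 := by
    rintro _ ⟨t, _, rfl⟩
    simp only [hf]
    refine ⟨by positivity, by nlinarith [Real.sin_sq_le_one t]⟩
  have hcf : ContinuousOn f (Set.uIcc (0:ℝ) (π/2)) := by fun_prop
  have hff' : ∀ x ∈ Ioo (min (0:ℝ) (π/2)) (max (0:ℝ) (π/2)),
      HasDerivWithinAt f (F x) (Ioi x) x := fun x _ => (hderiv x).hasDerivWithinAt
  have hgc : ContinuousOn g (f '' Ioo (min (0:ℝ) (π/2)) (max (0:ℝ) (π/2))) := by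
    rw [hmin, hmax]
    refine hgcont.mono ?_
    rintro _ ⟨t, ht, rfl⟩
    have hs : 0 < Real.sin t :=
      Real.sin_pos_of_pos_of_lt_pi ht.1 (lt_of_lt_of_le ht.2 (by linarith))
    exact ne_of_gt (by positivity)
  have hg1 : IntegrableOn g (f '' (Set.uIcc (0:ℝ) (π/2))) := by
    rw [huIcc]
    exact hgInt.mono_set himgIcc
  -- a.e. equality for the composite
  have hne : ∀ᵐ t : ℝ ∂(volume.restrict (Icc (0:ℝ) (π/2))), t ≠ 0 := by
    refine ae_restrict_of_ae ?_
    have hset : {t : ℝ | ¬ t ≠ 0} = {0} := by ext t; simp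
    rw [MeasureTheory.ae_iff, hset]
    exact measure_singleton 0
  have hconth : Continuous (fun t : ℝ => 8 * 4^n * (Real.sin t ^ (2*n) * Real.cos t ^ 2)) := by
    fun_prop
  have hg2 : IntegrableOn (fun x => F x • (g ∘ f) x) (Set.uIcc (0:ℝ) (π/2)) := by
    rw [huIcc]
    refine (hconth.integrableOn_Icc).congr ?_
    filter_upwards [hne, ae_restrict_mem measurableSet_Icc] with t h1 h2
    simp only [smul_eq_mul, Function.comp_apply]
    exact (hkey t ⟨h2.1.lt_of_ne (Ne.symm h1), h2.2⟩).symm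
  have hsub := integral_comp_smul_deriv''' (a := 0) (b := π/2) (f := f) (f' := F) (g := g)
    hcf hff' hgc hg1 hg2
  have hf0 : f 0 = 0 := by simp [hf]
  have hf2 : f (π/2) = 4 := by simp [hf]
  rw [hf0, hf2] at hsub
  have hL : (∫ x in (0:ℝ)..(π/2), F x • (g ∘ f) x)
      = ∫ t in (0:ℝ)..(π/2), 8 * 4^n * (Real.sin t ^ (2*n) * Real.cos t ^ 2) := by
    refine intervalIntegral.integral_congr_ae (ae_of_all _ fun t ht' => ?_)
    have ht : t ∈ Ioc (0:ℝ) (π/2) := by rwa [Set.uIoc_of_le hle] at ht'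
    simpa [smul_eq_mul] using hkey t ht
  rw [hL, intervalIntegral.integral_const_mul, wallis_cos n] at hsub
  rw [← hsub]
  have hcb : (Nat.centralBinom n : ℝ) = (Nat.choose (2*n) n : ℝ) := by
    norm_cast
  rw [← hcb]
  have h1 : ((n:ℝ)+1) ≠ 0 := by positivity
  have h4 : ((4:ℝ))^n ≠ 0 := by positivity
  have h2 : (2*(n:ℝ)+2) ≠ 0 := by positivity
  field_simp
  ring
end

section
/- For every natural number n, (1/(2π)) ∫_{-1}^{3} x^n √((3-x)(1+x)) dx equals the n-th Motzkin number M_n, i.e. the coefficient of x^n in (1 - x - √(1-2x-3x²))/(2x²). -/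
open MeasureTheory Real intervalIntegral
open Set


lemma key_integral (t : ℝ) (ht : |t| < 1/3) (ht0 : t ≠ 0) :
    ∫ x in (-1:ℝ)..3, Real.sqrt ((3 - x) * (1 + x)) / (1 - t * x)
      = π * ((1 - t - Real.sqrt (1 - 2*t - 3*t^2)) / t^2) := by
  have habs := abs_lt.mp ht
  have hd2 : Real.sqrt (1 - 2*t - 3*t^2) ^ 2 = 1 - 2*t - 3*t^2 := by
    rw [Real.sq_sqrt]; nlinarith [habs.1, habs.2]
  set d := Real.sqrt (1 - 2*t - 3*t^2) with hd
  have hdpos : 0 < d := Real.sqrt_pos.mpr (by nlinarith [habs.1, habs.2])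
  have hDpos : ∀ x ∈ Icc (-1:ℝ) 3, 0 < 1 - t * x := by
    intro x hx
    rcases le_or_gt t 0 with h | h
    · nlinarith [hx.1, hx.2, habs.1, habs.2]
    · nlinarith [hx.1, hx.2, habs.1, habs.2]
  set Φ : ℝ → ℝ := fun x =>
    -(1/t) * Real.sqrt ((3 - x) * (1 + x)) + ((1-t)/t^2) * Real.arcsin ((x-1)/2)
      + (d/t^2) * Real.arcsin ((1 + 3*t - (1-t)*x)/(2*(1 - t*x))) with hΦ
  have hcont : ContinuousOn Φ (Icc (-1:ℝ) 3) := by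
    apply ContinuousOn.add
    apply ContinuousOn.add
    · exact (continuous_const.mul (Real.continuous_sqrt.comp
        ((continuous_const.sub continuous_id).mul (continuous_const.add continuous_id)))).continuousOn
    · exact (continuous_const.mul (Real.continuous_arcsin.comp
        ((continuous_id.sub continuous_const).div_const 2))).continuousOn
    · apply ContinuousOn.mul continuousOn_const
      apply Real.continuous_arcsin.comp_continuousOn
      exact ContinuousOn.div (by fun_prop) (by fun_prop)
        (fun x hx => by have := hDpos x hx; positivity)
  have hderiv : ∀ x ∈ Ioo (-1:ℝ) 3,
      HasDerivAt Φ (Real.sqrt ((3 - x) * (1 + x)) / (1 - t * x)) x := by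
    intro x hx
    have hq : (0:ℝ) < (3 - x) * (1 + x) := by nlinarith [hx.1, hx.2]
    have hs2 : Real.sqrt ((3 - x) * (1 + x)) ^ 2 = (3 - x) * (1 + x) := Real.sq_sqrt hq.le
    set s := Real.sqrt ((3 - x) * (1 + x)) with hs
    have hspos : 0 < s := Real.sqrt_pos.mpr hq
    have hD : 0 < 1 - t * x := hDpos x ⟨hx.1.le, hx.2.le⟩
    -- term 1
    have hinner : HasDerivAt (fun y : ℝ => (3 - y) * (1 + y)) (2 - 2*x) x := by
      have := ((hasDerivAt_id x).const_sub 3).mul ((hasDerivAt_id x).const_add 1)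
      exact this.congr_deriv (by simp only [id_eq]; ring)
    have h1 : HasDerivAt (fun y : ℝ => -(1/t) * Real.sqrt ((3 - y) * (1 + y)))
        (-(1/t) * ((2 - 2*x) / (2 * s))) x := (hinner.sqrt hq.ne').const_mul _
    -- term 2
    have harc1 : HasDerivAt (fun y : ℝ => Real.arcsin ((y-1)/2))
        ((1 / Real.sqrt (1 - ((x-1)/2)^2)) * (1/2)) x := by
      have hi : HasDerivAt (fun y : ℝ => (y-1)/2) (1/2) x := by
        simpa using ((hasDerivAt_id x).sub_const 1).div_const 2
      exact (Real.hasDerivAt_arcsin (by nlinarith [hx.1]) (by nlinarith [hx.2])).comp x hi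
    have hsq1 : Real.sqrt (1 - ((x-1)/2)^2) = s/2 := by
      rw [show (1:ℝ) - ((x-1)/2)^2 = (s/2)^2 by linear_combination (-(1:ℝ)/4) * hs2,
        Real.sqrt_sq (by positivity)]
    have h2 : HasDerivAt (fun y : ℝ => ((1-t)/t^2) * Real.arcsin ((y-1)/2))
        (((1-t)/t^2) * ((1 / (s/2)) * (1/2))) x := by
      have := harc1.const_mul ((1-t)/t^2)
      rwa [hsq1] at this
    -- term 3
    have hkey : (2*(1 - t*x))^2 - (1 + 3*t - (1-t)*x)^2 = (d*s)^2 := by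
      linear_combination (-(s^2)) * hd2 + (-(1 - 2*t - 3*t^2)) * hs2
    have hnum : HasDerivAt (fun y : ℝ => 1 + 3*t - (1-t)*y) (-(1-t)) x := by
      simpa using ((hasDerivAt_id x).const_mul (1-t)).const_sub (1 + 3*t)
    have hden : HasDerivAt (fun y : ℝ => 2*(1 - t*y)) (-(2*t)) x := by
      have := ((hasDerivAt_id x).const_mul t).const_sub 1
      simpa using this.const_mul 2
    have hh : HasDerivAt (fun y : ℝ => (1 + 3*t - (1-t)*y)/(2*(1 - t*y)))
        ((-(1-t) * (2*(1 - t*x)) - (1 + 3*t - (1-t)*x) * (-(2*t))) / (2*(1 - t*x))^2) x :=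
      hnum.div hden (by positivity)
    have hhval : ((-(1-t) * (2*(1 - t*x)) - (1 + 3*t - (1-t)*x) * (-(2*t))) / (2*(1 - t*x))^2)
        = -(d^2) / (2*(1 - t*x)^2) := by
      rw [hd2]; field_simp; ring
    have hsq2 : Real.sqrt (1 - ((1 + 3*t - (1-t)*x)/(2*(1 - t*x)))^2)
        = d * s / (2*(1 - t*x)) := by
      rw [show (1:ℝ) - ((1 + 3*t - (1-t)*x)/(2*(1 - t*x)))^2 = (d * s / (2*(1 - t*x)))^2 by
          rw [div_pow, div_pow, eq_div_iff (by positivity)]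
          field_simp
          linear_combination hkey,
        Real.sqrt_sq (by positivity)]
    have hsqlt : ((1 + 3*t - (1-t)*x)/(2*(1 - t*x)))^2 < 1 := by
      rw [div_pow, div_lt_one (by positivity)]
      nlinarith [hkey, mul_pos (mul_pos hdpos hspos) (mul_pos hdpos hspos), mul_pos hdpos hspos]
    have harc2 : HasDerivAt (fun y : ℝ => Real.arcsin ((1 + 3*t - (1-t)*y)/(2*(1 - t*y))))
        ((1 / (d * s / (2*(1 - t*x)))) * (-(d^2) / (2*(1 - t*x)^2))) x := by
      have := (Real.hasDerivAt_arcsin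
        (by intro h; rw [h] at hsqlt; norm_num at hsqlt)
        (by intro h; rw [h] at hsqlt; norm_num at hsqlt)).comp x hh
      rw [hhval, hsq2] at this
      exact this
    have h3 := harc2.const_mul (d/t^2)
    have htotal := (h1.add h2).add h3
    have hexp : -(1/t) * ((2 - 2*x) / (2 * s)) + ((1-t)/t^2) * ((1 / (s/2)) * (1/2))
        + (d/t^2) * ((1 / (d * s / (2*(1 - t*x)))) * (-(d^2) / (2*(1 - t*x)^2)))
        = s / (1 - t*x) := by
      have hd2' : d^2 = 1 - 2*t - 3*t^2 := hd2
      have hs2' : s^2 = (3 - x) * (1 + x) := hs2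
      clear_value s d
      clear hΦ hcont hinner h1 harc1 hsq1 h2 hkey hnum hden hh hhval hsq2 hsqlt harc2 h3 htotal hd2 hs2 hd hs
      field_simp
      linear_combination (-1:ℝ) * hd2' + (-t^2) * hs2'
    rw [hΦ]
    exact hexp ▸ htotal
  have hint : IntervalIntegrable (fun x => Real.sqrt ((3 - x) * (1 + x)) / (1 - t * x))
      volume (-1) 3 := by
    apply ContinuousOn.intervalIntegrable
    rw [Set.uIcc_of_le (by norm_num)]
    exact ContinuousOn.div ((Real.continuous_sqrt.comp
        ((continuous_const.sub continuous_id).mul (continuous_const.add continuous_id))).continuousOn)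
      (by fun_prop) (fun x hx => (hDpos x hx).ne')
  rw [integral_eq_sub_of_hasDerivAt_of_le (by norm_num) hcont hderiv hint]
  have h13 : (0:ℝ) < 1 - 3*t := by linarith [habs.2]
  have h1t : (0:ℝ) < 1 + t := by linarith [habs.1]
  have hΦ3 : Φ 3 = ((1-t)/t^2) * (π/2) + (d/t^2) * (-(π/2)) := by
    rw [hΦ]
    simp only
    rw [show ((3:ℝ) - 3) * (1 + 3) = 0 by norm_num, Real.sqrt_zero,
      show ((3:ℝ)-1)/2 = 1 by norm_num,
      show (1 + 3*t - (1-t)*3)/(2*(1 - t*3)) = -1 by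
        rw [show (1:ℝ) + 3*t - (1-t)*3 = -(2*(1 - t*3)) by ring, neg_div,
          div_self (by nlinarith)],
      Real.arcsin_one, Real.arcsin_neg_one]
    ring
  have hΦm1 : Φ (-1) = ((1-t)/t^2) * (-(π/2)) + (d/t^2) * (π/2) := by
    rw [hΦ]
    simp only
    rw [show ((3:ℝ) - (-1)) * (1 + (-1)) = 0 by norm_num, Real.sqrt_zero,
      show ((-1:ℝ)-1)/2 = -1 by norm_num,
      show (1 + 3*t - (1-t)*(-1))/(2*(1 - t*(-1))) = 1 by
        rw [show (1:ℝ) + 3*t - (1-t)*(-1) = 2*(1 - t*(-1)) by ring,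
          div_self (by nlinarith)],
      Real.arcsin_one, Real.arcsin_neg_one]
    ring
  rw [hΦ3, hΦm1]
  field_simp
  ring


lemma sqrt_le_two {x : ℝ} : Real.sqrt ((3 - x) * (1 + x)) ≤ 2 := by
  rw [show (2:ℝ) = Real.sqrt 4 by rw [show (4:ℝ) = 2^2 by norm_num, Real.sqrt_sq]; norm_num]
  exact Real.sqrt_le_sqrt (by nlinarith [sq_nonneg (x - 1)])

lemma swap_lemma (t : ℝ) (ht : |t| < 1/3) :
    HasSum (fun n : ℕ => (∫ x in (-1:ℝ)..3, x ^ n * Real.sqrt ((3 - x) * (1 + x))) * t ^ n)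
      (∫ x in (-1:ℝ)..3, Real.sqrt ((3 - x) * (1 + x)) / (1 - t * x)) := by
  have hw : Continuous (fun x : ℝ => Real.sqrt ((3 - x) * (1 + x))) :=
    Real.continuous_sqrt.comp ((continuous_const.sub continuous_id).mul
      (continuous_const.add continuous_id))
  set μ : Measure ℝ := volume.restrict (Ioc (-1:ℝ) 3) with hμ
  set F : ℕ → ℝ → ℝ := fun n x => (t * x) ^ n * Real.sqrt ((3 - x) * (1 + x)) with hF
  have hFc : ∀ n, Continuous (F n) := fun n =>
    ((continuous_const.mul continuous_id).pow n).mul hw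
  have hF_int : ∀ n, Integrable (F n) μ :=
    fun n => (hFc n).integrableOn_Ioc.integrable
  have hbound : ∀ n : ℕ, ∀ x ∈ Ioc (-1:ℝ) 3, ‖F n x‖ ≤ (3 * |t|) ^ n * 2 := by
    intro n x hx
    have h1 : |x| ≤ 3 := abs_le.mpr ⟨by linarith [hx.1], hx.2⟩
    have h2 : (0:ℝ) ≤ (3 - x) * (1 + x) := by nlinarith [hx.1, hx.2]
    rw [hF, norm_mul, norm_pow, Real.norm_eq_abs, Real.norm_eq_abs,
      abs_of_nonneg (Real.sqrt_nonneg _)]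
    have : |t * x| ^ n ≤ (3 * |t|) ^ n := by
      apply pow_le_pow_left₀ (abs_nonneg _)
      rw [abs_mul]
      calc |t| * |x| ≤ |t| * 3 := by nlinarith [abs_nonneg t]
      _ = 3 * |t| := by ring
    exact mul_le_mul this sqrt_le_two (Real.sqrt_nonneg _) (by positivity)
  have hgs : Summable (fun n : ℕ => (3 * |t|) ^ n * (2 * 4)) :=
    (summable_geometric_of_lt_one (by positivity)
      (by linarith [ht])).mul_right (2*4)
  have hF_sum : Summable fun n => ∫ x, ‖F n x‖ ∂μ := by
    apply Summable.of_nonneg_of_le (fun n => integral_nonneg (fun x => norm_nonneg _))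
      (fun n => ?_) hgs
    calc ∫ x, ‖F n x‖ ∂μ ≤ ∫ x, (3 * |t|) ^ n * 2 ∂μ := by
          apply integral_mono_of_nonneg (Filter.Eventually.of_forall fun x => norm_nonneg _)
            (integrable_const _)
          rw [hμ]
          exact (ae_restrict_iff' measurableSet_Ioc).mpr
            (Filter.Eventually.of_forall (fun x hx => hbound n x hx))
      _ = (3 * |t|) ^ n * (2 * 4) := by
          rw [MeasureTheory.integral_const, hμ, measureReal_def, Measure.restrict_apply_univ, Real.volume_Ioc,
            smul_eq_mul]
          rw [ENNReal.toReal_ofReal (by norm_num : (0:ℝ) ≤ 3 - (-1))]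
          ring
  have key := hasSum_integral_of_summable_integral_norm hF_int hF_sum
  have habs3 : ∀ x ∈ Ioc (-1:ℝ) 3, |t * x| < 1 := by
    intro x hx
    have h1 : |x| ≤ 3 := abs_le.mpr ⟨by linarith [hx.1], hx.2⟩
    rw [abs_mul]
    calc |t| * |x| ≤ |t| * 3 := by nlinarith [abs_nonneg t]
      _ < 1 := by linarith
  have heq2 : ∫ x, (∑' n, F n x) ∂μ
      = ∫ x in (-1:ℝ)..3, Real.sqrt ((3 - x) * (1 + x)) / (1 - t * x) := by
    rw [intervalIntegral.integral_of_le (by norm_num : (-1:ℝ) ≤ 3), hμ]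
    apply setIntegral_congr_fun measurableSet_Ioc
    intro x hx
    have h1 : |t * x| < 1 := habs3 x hx
    simp only [hF]
    rw [tsum_mul_right, tsum_geometric_of_norm_lt_one (by rwa [Real.norm_eq_abs]),
      inv_mul_eq_div]
  have heq1 : ∀ n : ℕ, (∫ x in (-1:ℝ)..3, x ^ n * Real.sqrt ((3 - x) * (1 + x))) * t ^ n
      = ∫ x, F n x ∂μ := by
    intro n
    have hfx : ∀ x : ℝ, F n x = t ^ n * (x ^ n * Real.sqrt ((3 - x) * (1 + x))) := by
      intro x; rw [hF]; simp only [mul_pow]; ring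
    rw [funext hfx]
    beta_reduce
    rw [MeasureTheory.integral_const_mul,
      intervalIntegral.integral_of_le (by norm_num : (-1:ℝ) ≤ 3), hμ, mul_comm]
  rw [← heq2]
  exact (funext heq1 : _) ▸ key

lemma hasSum_I (t : ℝ) (ht : |t| < 1/3) (ht0 : t ≠ 0) :
    HasSum (fun n : ℕ =>
        ((1/(2*π)) * ∫ x in (-1:ℝ)..3, x ^ n * Real.sqrt ((3 - x) * (1 + x))) * t ^ n)
      ((1 - t - Real.sqrt (1 - 2 * t - 3 * t ^ 2)) / (2 * t ^ 2)) := by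
  have h := (swap_lemma t ht).mul_left (1/(2*π))
  rw [key_integral t ht ht0] at h
  have hval : (1/(2*π)) * (π * ((1 - t - Real.sqrt (1 - 2*t - 3*t^2)) / t^2))
      = (1 - t - Real.sqrt (1 - 2 * t - 3 * t ^ 2)) / (2 * t ^ 2) := by
    rw [show (1:ℝ) - 2*t - 3*t^2 = 1 - 2 * t - 3 * t ^ 2 by ring]
    field_simp
  rw [hval] at h
  have hfun : (fun n : ℕ =>
        (1/(2*π)) * ((∫ x in (-1:ℝ)..3, x ^ n * Real.sqrt ((3 - x) * (1 + x))) * t ^ n))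
      = fun n : ℕ =>
        ((1/(2*π)) * ∫ x in (-1:ℝ)..3, x ^ n * Real.sqrt ((3 - x) * (1 + x))) * t ^ n :=
    funext fun n => by ring
  exact hfun ▸ h

theorem motzkin_moments (M : ℕ → ℝ)
    (hM : ∃ ε > (0:ℝ), ∀ x : ℝ, x ≠ 0 → |x| < ε →
      ∑' n : ℕ, M n * x ^ n
        = (1 - x - Real.sqrt (1 - 2 * x - 3 * x ^ 2)) / (2 * x ^ 2)) :
    ∀ n : ℕ,
      (1 / (2 * π)) * ∫ x in (-1:ℝ)..3, x ^ n * Real.sqrt ((3 - x) * (1 + x)) = M n := by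
  obtain ⟨ε, hε, hMe⟩ := hM
  set I : ℕ → ℝ := fun n =>
    (1/(2*π)) * ∫ x in (-1:ℝ)..3, x ^ n * Real.sqrt ((3 - x) * (1 + x)) with hI
  set δ : ℝ := min ε (1/3) with hδ
  have hδpos : 0 < δ := lt_min hε (by norm_num)
  set x₀ : ℝ := δ / 2 with hx₀
  have hx₀pos : 0 < x₀ := by positivity
  have hx₀δ : x₀ < δ := by rw [hx₀]; linarith
  have hx₀ε : x₀ < ε := lt_of_lt_of_le hx₀δ (min_le_left _ _)
  have hx₀3 : x₀ < 1/3 := lt_of_lt_of_le hx₀δ (min_le_right _ _)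
  have hfpos : ∀ y : ℝ, y ≠ 0 → |y| < 1/3 →
      0 < (1 - y - Real.sqrt (1 - 2 * y - 3 * y ^ 2)) / (2 * y ^ 2) := by
    intro y hy0 hy
    have habs := abs_lt.mp hy
    have h1 : Real.sqrt (1 - 2 * y - 3 * y ^ 2) < 1 - y := by
      rw [show (1:ℝ) - y = Real.sqrt ((1 - y)^2) by rw [Real.sqrt_sq (by linarith [habs.2])]]
      apply Real.sqrt_lt_sqrt (by nlinarith [habs.1, habs.2])
      have : y^2 > 0 := by positivity
      nlinarith
    have h2 : (0:ℝ) < 2 * y ^ 2 := by positivity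
    apply div_pos (by linarith) h2
  -- summability of M at x₀
  have hx₀abs : |x₀| = x₀ := abs_of_pos hx₀pos
  have hMsum : Summable (fun n => M n * x₀ ^ n) := by
    by_contra hns
    have h0 := tsum_eq_zero_of_not_summable hns
    rw [hMe x₀ hx₀pos.ne' (by rwa [hx₀abs])] at h0
    exact absurd h0.symm (ne_of_gt (hfpos x₀ hx₀pos.ne' (by rwa [hx₀abs]))).symm
  have hIsum : Summable (fun n => I n * x₀ ^ n) :=
    (hasSum_I x₀ (by rwa [hx₀abs]) hx₀pos.ne').summable
  -- radii
  set r : NNReal := ⟨x₀, hx₀pos.le⟩ with hr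
  have hrad : ∀ c : ℕ → ℝ, Summable (fun n => c n * x₀ ^ n) →
      (r : ENNReal) ≤ (FormalMultilinearSeries.ofScalars ℝ c).radius := by
    intro c hc
    apply FormalMultilinearSeries.le_radius_of_tendsto _ (l := 0)
    have h0 : Filter.Tendsto (fun n => |c n * x₀ ^ n|) Filter.atTop (nhds 0) := by
      simpa using hc.tendsto_atTop_zero.abs
    apply h0.congr
    intro n
    rw [FormalMultilinearSeries.ofScalars_norm, abs_mul, abs_pow, hx₀abs]
    rfl
  have hrpos : (0 : ENNReal) < (r : ENNReal) := by
    rw [ENNReal.coe_pos]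
    exact_mod_cast hx₀pos
  set pI := FormalMultilinearSeries.ofScalars ℝ I with hpI
  set pM := FormalMultilinearSeries.ofScalars ℝ M with hpM
  have hFP_I : HasFPowerSeriesAt pI.sum pI 0 :=
    (pI.hasFPowerSeriesOnBall (lt_of_lt_of_le hrpos (hrad I hIsum))).hasFPowerSeriesAt
  have hFP_M : HasFPowerSeriesAt pM.sum pM 0 :=
    (pM.hasFPowerSeriesOnBall (lt_of_lt_of_le hrpos (hrad M hMsum))).hasFPowerSeriesAt
  -- sums agree off 0
  have hsumval : ∀ y : ℝ, y ≠ 0 → |y| < δ → pI.sum y = pM.sum y := by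
    intro y hy0 hy
    have hy3 : |y| < 1/3 := lt_of_lt_of_le hy (min_le_right _ _)
    have hyε : |y| < ε := lt_of_lt_of_le hy (min_le_left _ _)
    have h1 : pI.sum y = ∑' n, I n * y ^ n := by
      rw [FormalMultilinearSeries.sum]
      exact tsum_congr fun n => by
        rw [FormalMultilinearSeries.ofScalars_apply_eq, smul_eq_mul]
    have h2 : pM.sum y = ∑' n, M n * y ^ n := by
      rw [FormalMultilinearSeries.sum]
      exact tsum_congr fun n => by
        rw [FormalMultilinearSeries.ofScalars_apply_eq, smul_eq_mul]
    rw [h1, h2, (hasSum_I y hy3 hy0).tsum_eq, hMe y hy0 hyε]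
  have hmem : {y : ℝ | |y| < δ} ∈ nhds (0:ℝ) := by
    have := Metric.ball_mem_nhds (0:ℝ) hδpos
    apply Filter.mem_of_superset this
    intro y hy
    simpa [Real.dist_eq] using hy
  have heqev' : pI.sum =ᶠ[nhdsWithin (0:ℝ) {(0:ℝ)}ᶜ] pM.sum := by
    rw [Filter.EventuallyEq, eventually_nhdsWithin_iff]
    filter_upwards [hmem] with y hy hy0
    exact hsumval y hy0 hy
  have h00 : pI.sum 0 = pM.sum 0 := by
    have t1 : Filter.Tendsto pI.sum (nhdsWithin (0:ℝ) {(0:ℝ)}ᶜ) (nhds (pI.sum 0)) :=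
      (hFP_I.continuousAt.continuousWithinAt).tendsto
    have t2 : Filter.Tendsto pI.sum (nhdsWithin (0:ℝ) {(0:ℝ)}ᶜ) (nhds (pM.sum 0)) :=
      ((hFP_M.continuousAt.continuousWithinAt).tendsto).congr' heqev'.symm
    exact tendsto_nhds_unique t1 t2
  have heqev : pI.sum =ᶠ[nhds (0:ℝ)] pM.sum := by
    filter_upwards [hmem] with y hy
    rcases eq_or_ne y 0 with rfl | hy0
    · exact h00
    · exact hsumval y hy0 hy
  have hpeq : pI = pM := hFP_I.eq_formalMultilinearSeries_of_eventually hFP_M heqev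
  have hIM : I = M := by
    rw [hpI, hpM] at hpeq
    exact (FormalMultilinearSeries.ofScalars_series_eq_iff (𝕜 := ℝ) ℝ I M).mp hpeq
  intro n
  exact congrFun hIM n
end
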